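/- For every rational number n/m ∈ (0,1) (with 0 < n < m), there is a finite set Γ of propositional formulas that is [n/m, 1]-satisfiable but not (n/m, 1]-satisfiable: some probability distribution gives every member of Γ probability at least n/m, but no distribution gives every member probability strictly greater than n/m. -/

import Mathlib

/-- Propositional formulas: atoms, negation, disjunction. -/
inductive Fml : Type
  | atom : ℕ → Fml
  | neg : Fml → Fml
  | or : Fml → Fml → Fml
deriving DecidableEq

namespace Fml

def and (φ ψ : Fml) : Fml := neg (or (neg φ) (neg ψ))

def bot : Fml := and (atom 0) (neg (atom 0))

def imp (φ ψ : Fml) : Fml := or (neg φ) ψ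

def eval (v : ℕ → Bool) : Fml → Bool
  | atom n => v n
  | neg φ => !(eval v φ)
  | or φ ψ => (eval v φ) || (eval v ψ)

end Fml

/-- Two formulas are jointly classically unsatisfiable. -/
def Incompatible (φ ψ : Fml) : Prop :=
  ∀ v : ℕ → Bool, ¬(φ.eval v = true ∧ ψ.eval v = true)

/-- Classical (Set-Set) validity. -/
def ClValid (Γ Δ : Finset Fml) : Prop :=
  ∀ v : ℕ → Bool, (∀ γ ∈ Γ, γ.eval v = true) → ∃ δ ∈ Δ, δ.eval v = true

/-- Classical single-conclusion entailment. -/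
def ClEntails (Γ : Finset Fml) (φ : Fml) : Prop :=
  ∀ v : ℕ → Bool, (∀ γ ∈ Γ, γ.eval v = true) → φ.eval v = true

def ClConsistent (Γ : Finset Fml) : Prop :=
  ∃ v : ℕ → Bool, ∀ γ ∈ Γ, γ.eval v = true

def Tautology (φ : Fml) : Prop := ∀ v : ℕ → Bool, φ.eval v = true

/-- A probability distribution on formulas. -/
structure ProbDist where
  p : Fml → ℝ
  nonneg : ∀ φ, 0 ≤ p φ
  le_one : ∀ φ, p φ ≤ 1
  bot_eq : p Fml.bot = 0
  neg_eq : ∀ φ, p (Fml.neg φ) = 1 - p φ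
  add_eq : ∀ φ ψ, Incompatible φ ψ → p (Fml.or φ ψ) = p φ + p ψ

/-- A probabilistic model: worlds with classical valuations and a finitely
additive probability measure on subsets of worlds. -/
structure PModel where
  W : Type
  nonempty : Nonempty W
  val : W → ℕ → Bool
  μ : Set W → ℝ
  nonneg : ∀ A : Set W, 0 ≤ μ A
  empty_eq : μ (∅ : Set W) = 0
  univ_eq : μ (Set.univ : Set W) = 1
  add_eq : ∀ A B : Set W, Disjoint A B → μ (A ∪ B) = μ A + μ B

/-- Denotation of a formula in a model. -/
def PModel.den (M : PModel) (φ : Fml) : Set M.W := {w | φ.eval (M.val w) = true}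

/-- Induced probability of a formula in a model. -/
def PModel.prob (M : PModel) (φ : Fml) : ℝ := M.μ (M.den φ)

/-- An upset of [0,1]: contains 1, excludes 0, upward closed within [0,1]. -/
def IsUpset (α : Set ℝ) : Prop :=
  α ⊆ Set.Icc 0 1 ∧ (1 : ℝ) ∈ α ∧ (0 : ℝ) ∉ α ∧
    ∀ x ∈ α, ∀ y ∈ Set.Icc (0:ℝ) 1, x ≤ y → y ∈ α

/-- The mirror image of α. -/
def mirror (α : Set ℝ) : Set ℝ := {x ∈ Set.Icc (0:ℝ) 1 | 1 - x ∈ α}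

/-- The dual of α. -/
def dual (α : Set ℝ) : Set ℝ := Set.Icc (0:ℝ) 1 \ mirror α

/-- Conjunction of a finite set of formulas. -/
noncomputable def conj (Γ : Finset Fml) : Fml := Γ.toList.foldr Fml.and (Fml.neg Fml.bot)

/-- Disjunction of a finite set of formulas. -/
noncomputable def disj (Δ : Finset Fml) : Fml := Δ.toList.foldr Fml.or Fml.bot

/-- Disjunction of a list of formulas. -/
def disjList (l : List Fml) : Fml := l.foldr Fml.or Fml.bot

/-- α-preservation validity (over probability distributions). -/
def PresValid (α : Set ℝ) (Γ Δ : Finset Fml) : Prop :=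
  ∀ P : ProbDist, (∀ γ ∈ Γ, P.p γ ∈ α) → ∃ δ ∈ Δ, P.p δ ∈ α

/-- α-preservation validity (over probabilistic models). -/
def PresValidM (α : Set ℝ) (Γ Δ : Finset Fml) : Prop :=
  ∀ M : PModel, (∀ γ ∈ Γ, M.prob γ ∈ α) → ∃ δ ∈ Δ, M.prob δ ∈ α

/-- α-symmetric validity. -/
def SymValid (α : Set ℝ) (Γ Δ : Finset Fml) : Prop :=
  ∀ P : ProbDist, (∀ γ ∈ Γ, P.p γ ∈ α) → ∃ δ ∈ Δ, P.p δ ∉ mirror α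

/-- α-satisfiability of a finite set of formulas. -/
def Satis (α : Set ℝ) (Γ : Finset Fml) : Prop :=
  ∃ P : ProbDist, ∀ γ ∈ Γ, P.p γ ∈ α

namespace Stmt11Aux

@[simp] lemma eval_and (v : ℕ → Bool) (φ ψ : Fml) :
    (Fml.and φ ψ).eval v = (φ.eval v && ψ.eval v) := by
  simp [Fml.and, Fml.eval]

@[simp] lemma eval_bot (v : ℕ → Bool) : Fml.bot.eval v = false := by
  simp [Fml.bot, Fml.eval, Fml.and]

/-- Conjunction of negations of atoms `0, …, i-1`. -/
def below : ℕ → Fml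
  | 0 => Fml.neg Fml.bot
  | (i+1) => Fml.and (below i) (Fml.neg (Fml.atom i))

lemma eval_below (v : ℕ → Bool) (i : ℕ) :
    (below i).eval v = true ↔ ∀ j < i, v j = false := by
  induction i with
  | zero => simp [below, Fml.eval]
  | succ i ih =>
    show (Fml.and (below i) (Fml.neg (Fml.atom i))).eval v = true ↔ _
    rw [eval_and, Bool.and_eq_true, ih]
    simp only [Fml.eval, Bool.not_eq_true']
    constructor
    · rintro ⟨h1, h2⟩ j hj
      rcases Nat.lt_succ_iff_lt_or_eq.mp hj with h | h
      · exact h1 j h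
      · subst h; exact h2
    · intro h
      exact ⟨fun j hj => h j (Nat.lt_succ_of_lt hj), h i (Nat.lt_succ_self i)⟩

/-- `phi i` says that atom `i` is the first true atom. -/
def phi (i : ℕ) : Fml := Fml.and (Fml.atom i) (below i)

lemma eval_phi (v : ℕ → Bool) (i : ℕ) :
    (phi i).eval v = true ↔ v i = true ∧ ∀ j < i, v j = false := by
  simp [phi, Fml.eval, eval_below]

lemma incompat (i j : ℕ) (h : i ≠ j) : Incompatible (phi i) (phi j) := by
  rintro v ⟨hi, hj⟩
  rw [eval_phi] at hi hj
  rcases Nat.lt_or_gt_of_ne h with h' | h'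
  · have h2 := hj.2 i h'; rw [hi.1] at h2; exact Bool.noConfusion h2
  · have h2 := hi.2 j h'; rw [hj.1] at h2; exact Bool.noConfusion h2

lemma eval_disjList (v : ℕ → Bool) (l : List Fml) :
    (disjList l).eval v = true ↔ ∃ φ ∈ l, φ.eval v = true := by
  induction l with
  | nil => simp [disjList]
  | cons a l ih =>
    show (Fml.or a (disjList l)).eval v = true ↔ _
    simp [Fml.eval, ih]

lemma incompat_disjList (φ : Fml) (l : List Fml) (h : ∀ ψ ∈ l, Incompatible φ ψ) :
    Incompatible φ (disjList l) := by
  rintro v ⟨h1, h2⟩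
  obtain ⟨ψ, hψ, he⟩ := (eval_disjList v l).mp h2
  exact h ψ hψ v ⟨h1, he⟩

lemma p_disjList (P : ProbDist) (l : List Fml) (h : l.Pairwise Incompatible) :
    P.p (disjList l) = (l.map P.p).sum := by
  induction l with
  | nil => simpa [disjList] using P.bot_eq
  | cons a l ih =>
    rcases List.pairwise_cons.mp h with ⟨ha, hl⟩
    show P.p (Fml.or a (disjList l)) = _
    rw [P.add_eq _ _ (incompat_disjList a l ha), ih hl]
    simp

lemma den_or (M : PModel) (φ ψ : Fml) : M.den (Fml.or φ ψ) = M.den φ ∪ M.den ψ := by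
  ext w; simp [PModel.den, Fml.eval]

lemma den_neg (M : PModel) (φ : Fml) : M.den (Fml.neg φ) = (M.den φ)ᶜ := by
  ext w; simp [PModel.den, Fml.eval]

lemma den_bot (M : PModel) : M.den Fml.bot = ∅ := by
  ext w; simp [PModel.den]

lemma compl_prob (M : PModel) (A : Set M.W) : M.μ Aᶜ = 1 - M.μ A := by
  have h := M.add_eq A Aᶜ disjoint_compl_right
  rw [Set.union_compl_self, M.univ_eq] at h
  linarith

/-- Every probabilistic model induces a probability distribution on formulas. -/
noncomputable def toDist (M : PModel) : ProbDist where
  p := M.prob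
  nonneg φ := M.nonneg _
  le_one φ := by
    have h := compl_prob M (M.den φ)
    have h2 := M.nonneg (M.den φ)ᶜ
    unfold PModel.prob; linarith
  bot_eq := by unfold PModel.prob; rw [den_bot, M.empty_eq]
  neg_eq φ := by unfold PModel.prob; rw [den_neg, compl_prob]
  add_eq φ ψ h := by
    unfold PModel.prob
    rw [den_or, M.add_eq]
    rw [Set.disjoint_left]
    intro w hw hw'
    exact h (M.val w) ⟨hw, hw'⟩

/-- The uniform model on `Fin m`. -/
noncomputable def uniM (m : ℕ) (hm : 0 < m) : PModel where
  W := Fin m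
  nonempty := ⟨⟨0, hm⟩⟩
  val w i := decide (i = w.val)
  μ A := (A.ncard : ℝ) / m
  nonneg A := by
    show (0:ℝ) ≤ (A.ncard : ℝ) / m
    positivity
  empty_eq := by
    show (((∅ : Set (Fin m)).ncard : ℝ)) / m = 0
    simp
  univ_eq := by
    show (((Set.univ : Set (Fin m)).ncard : ℝ)) / m = 1
    rw [Set.ncard_univ, Nat.card_eq_fintype_card, Fintype.card_fin]
    field_simp
  add_eq A B h := by
    show (((A ∪ B).ncard : ℝ)) / m = (A.ncard : ℝ) / m + (B.ncard : ℝ) / m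
    rw [Set.ncard_union_eq h (Set.toFinite A) (Set.toFinite B)]
    push_cast; ring

lemma prob_phi (m : ℕ) (hm : 0 < m) (i : ℕ) (hi : i < m) :
    (uniM m hm).prob (phi i) = 1 / m := by
  have hden : (uniM m hm).den (phi i) = {(⟨i, hi⟩ : Fin m)} := by
    ext w
    simp only [PModel.den, uniM, Set.mem_setOf_eq, Set.mem_singleton_iff, eval_phi,
      decide_eq_true_eq, decide_eq_false_iff_not]
    constructor
    · rintro ⟨h1, _⟩; exact Fin.ext h1.symm
    · rintro rfl; exact ⟨rfl, fun j hj hEq => absurd hEq (Nat.ne_of_lt hj)⟩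
  unfold PModel.prob
  rw [hden]
  show ((({(⟨i, hi⟩ : Fin m)} : Set (Fin m))).ncard : ℝ) / m = 1 / m
  rw [Set.ncard_singleton]; norm_num

lemma pairwise_phi_map (f : ℕ → ℕ) (n : ℕ) (hf : ∀ a < n, ∀ b < n, a < b → f a ≠ f b) :
    ((List.range n).map (fun i => phi (f i))).Pairwise Incompatible := by
  rw [List.pairwise_map]
  refine (List.pairwise_lt_range : (List.range n).Pairwise (· < ·)).imp_of_mem ?_
  intro a b ha hb hab
  exact incompat _ _ (hf a (List.mem_range.mp ha) b (List.mem_range.mp hb) hab)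

lemma list_sum_range (g : ℕ → ℝ) (n : ℕ) :
    ((List.range n).map g).sum = ∑ i ∈ Finset.range n, g i := by
  induction n with
  | zero => simp
  | succ n ih =>
    rw [List.range_succ, Finset.sum_range_succ, List.map_append, List.sum_append]
    simp [ih]

end Stmt11Aux
open Stmt11Aux in
/-- for every rational n/m ∈ (0,1), some finite set is
[n/m,1]-satisfiable but not (n/m,1]-satisfiable. -/
theorem stmt11 (n m : ℕ) (h0 : 0 < n) (hnm : n < m) :
    ∃ Γ : Finset Fml,
      Satis (Set.Icc ((n:ℝ)/(m:ℝ)) 1) Γ ∧ ¬ Satis (Set.Ioc ((n:ℝ)/(m:ℝ)) 1) Γ := by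
  classical
  haveI : NeZero m := ⟨by omega⟩
  have hm : 0 < m := by omega
  have hmr : (0:ℝ) < m := by exact_mod_cast hm
  set Wf : ZMod m → Fml :=
    fun k => disjList ((List.range n).map (fun (j : ℕ) => phi ((k + (j : ZMod m)).val))) with hWf
  have hpair : ∀ k : ZMod m,
      ((List.range n).map (fun (j : ℕ) => phi ((k + (j:ZMod m)).val))).Pairwise Incompatible := by
    intro k
    refine pairwise_phi_map (fun (j : ℕ) => (k + (j:ZMod m)).val) n ?_
    intro a ha b hb hab hval
    have h1 : k + (a:ZMod m) = k + (b:ZMod m) := ZMod.val_injective m hval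
    have h2 : (a : ZMod m) = b := add_left_cancel h1
    have h3 := congrArg ZMod.val h2
    rw [ZMod.val_cast_of_lt (lt_trans ha hnm), ZMod.val_cast_of_lt (lt_trans hb hnm)] at h3
    omega
  have hwin : ∀ (P : ProbDist) (k : ZMod m),
      P.p (Wf k) = ∑ j ∈ Finset.range n, P.p (phi ((k + (j:ZMod m)).val)) := by
    intro P k
    simp only [hWf]
    rw [p_disjList P _ (hpair k), List.map_map, list_sum_range]
    rfl
  refine ⟨Finset.image Wf Finset.univ, ?_, ?_⟩
  · -- satisfiable with the uniform model
    refine ⟨toDist (uniM m hm), ?_⟩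
    intro γ hγ
    obtain ⟨k, -, rfl⟩ := Finset.mem_image.mp hγ
    rw [hwin]
    have hc : ∀ j ∈ Finset.range n, (toDist (uniM m hm)).p (phi ((k + (j:ZMod m)).val)) = 1/m :=
      fun j _ => prob_phi m hm _ (ZMod.val_lt _)
    rw [Finset.sum_congr rfl hc, Finset.sum_const, Finset.card_range, nsmul_eq_mul]
    have : (n:ℝ) * (1/m) = n/m := by ring
    rw [this]
    constructor
    · exact le_refl _
    · rw [div_le_one hmr]; exact_mod_cast le_of_lt hnm
  · rintro ⟨P, hP⟩
    set p : ℕ → ℝ := fun i => P.p (phi i) with hp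
    have hfull : ∑ i ∈ Finset.range m, p i ≤ 1 := by
      have hpw : ((List.range m).map phi).Pairwise Incompatible := by
        rw [List.pairwise_map]
        exact (List.pairwise_lt_range : (List.range m).Pairwise (· < ·)).imp (fun h => incompat _ _ (Nat.ne_of_lt h))
      have hsum := p_disjList P _ hpw
      rw [List.map_map, list_sum_range] at hsum
      calc ∑ i ∈ Finset.range m, p i = P.p (disjList ((List.range m).map phi)) := hsum.symm
        _ ≤ 1 := P.le_one _
    have hval_sum : ∑ k : ZMod m, p k.val = ∑ i ∈ Finset.range m, p i := by
      have himg : (Finset.univ : Finset (ZMod m)).image ZMod.val = Finset.range m := by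
        ext i
        simp only [Finset.mem_image, Finset.mem_univ, true_and, Finset.mem_range]
        constructor
        · rintro ⟨k, rfl⟩; exact ZMod.val_lt k
        · intro hi; exact ⟨(i : ZMod m), ZMod.val_cast_of_lt hi⟩
      rw [← himg, Finset.sum_image (fun a _ b _ h => ZMod.val_injective m h)]
    have hshift : ∀ j : ℕ, ∑ k : ZMod m, p ((k + (j:ZMod m)).val) = ∑ k : ZMod m, p k.val :=
      fun j => Fintype.sum_equiv (Equiv.addRight (j:ZMod m)) _ _ (fun k => rfl)
    have hlt : ∀ k : ZMod m, (n:ℝ)/m < P.p (Wf k) := by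
      intro k
      exact (hP (Wf k) (Finset.mem_image_of_mem _ (Finset.mem_univ k))).1
    haveI : Nonempty (ZMod m) := ⟨0⟩
    have h1 : (n:ℝ) < ∑ k : ZMod m, P.p (Wf k) := by
      have hs := Finset.sum_lt_sum_of_nonempty Finset.univ_nonempty (fun k _ => hlt k)
      rw [Finset.sum_const, Finset.card_univ, ZMod.card, nsmul_eq_mul] at hs
      have : (m:ℝ) * ((n:ℝ)/m) = n := by field_simp
      linarith [hs, this]
    have h2 : ∑ k : ZMod m, P.p (Wf k) ≤ n := by
      calc ∑ k : ZMod m, P.p (Wf k)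
          = ∑ k : ZMod m, ∑ j ∈ Finset.range n, p ((k + (j:ZMod m)).val) :=
            Finset.sum_congr rfl (fun k _ => hwin P k)
        _ = ∑ j ∈ Finset.range n, ∑ k : ZMod m, p ((k + (j:ZMod m)).val) := Finset.sum_comm
        _ = ∑ j ∈ Finset.range n, ∑ i ∈ Finset.range m, p i := by
            exact Finset.sum_congr rfl fun j _ => by rw [hshift j, hval_sum]
        _ ≤ ∑ j ∈ Finset.range n, 1 := Finset.sum_le_sum (fun j _ => hfull)
        _ = n := by simp
    linarith
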